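/- Kurosh–Ore theorem: let M be a modular lattice with least element ⊥, and let L = L₁ ⊔ L₂ ⊔ ⋯ ⊔ L_p = M₁ ⊔ M₂ ⊔ ⋯ ⊔ M_r be two representations of an element L as finite joins such that every component L_i and M_j is sup-irreducible and both representations are irredundant (omitting any single component from either representation strictly decreases the join). Then p = r, and for every index i there exists an index j such that L = L₁ ⊔ ⋯ ⊔ L_{i−1} ⊔ M_j ⊔ L_{i+1} ⊔ ⋯ ⊔ L_p. -/
import Mathlib


/-- An element of a lattice with ⊥ is sup-irreducible if it is nonzero and
cannot be written as a join except trivially. -/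
def SupIrreducible {M : Type*} [Lattice M] [OrderBot M] (a : M) : Prop :=
  a ≠ ⊥ ∧ ∀ b c : M, a = b ⊔ c → a = b ∨ a = c

section Aux

variable {M : Type*} [Lattice M] [IsModularLattice M] [OrderBot M]

/-- `L` is sup-irreducible "over `A`" when `L = a ⊔ A` with `a` sup-irreducible. -/
lemma irr_over {L A a : M} (ha : SupIrreducible a) (hA : A < L) (h : a ⊔ A = L)
    {X Y : M} (hX : A ≤ X) (hY : A ≤ Y) (hXY : X ⊔ Y = L) : X = L ∨ Y = L := by
  set u := X ⊓ a with hu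
  set v := Y ⊓ a with hv
  have hXL : X ≤ L := le_sup_left.trans hXY.le
  have hYL : Y ≤ L := le_sup_right.trans hXY.le
  have huA : A ⊔ u = X := by
    have := sup_inf_assoc_of_le (z := X) a hX
    rw [inf_comm a X, ← hu] at this
    rw [← this, sup_comm A a, h, inf_eq_right.2 hXL]
  have hvA : A ⊔ v = Y := by
    have := sup_inf_assoc_of_le (z := Y) a hY
    rw [inf_comm a Y, ← hv] at this
    rw [← this, sup_comm A a, h, inf_eq_right.2 hYL]
  have huv : u ⊔ v ≤ a := sup_le inf_le_right inf_le_right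
  have key : a = u ⊔ v := by
    have hmod := sup_inf_assoc_of_le (x := u ⊔ v) (z := a) A huv
    have hAa : A ⊓ a ≤ u ⊔ v := le_sup_left.trans' (le_inf (inf_le_left.trans hX) inf_le_right)
    have hsup : u ⊔ v ⊔ A = L := by
      have : u ⊔ v ⊔ A = (A ⊔ u) ⊔ (A ⊔ v) := by
        rw [sup_sup_sup_comm, sup_idem, sup_comm (u ⊔ v) A, ← sup_assoc]
      rw [this, huA, hvA, hXY]
    rw [sup_eq_left.2 hAa, hsup, inf_comm, inf_eq_left.2 (h ▸ le_sup_left)] at hmod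
    exact hmod
  rcases ha.2 u v key with hcase | hcase
  · left
    have haX : a ≤ X := hcase.le.trans inf_le_left
    exact le_antisymm hXL (h ▸ sup_le haX hX)
  · right
    have haY : a ≤ Y := hcase.le.trans inf_le_left
    exact le_antisymm hYL (h ▸ sup_le haY hY)

/-- Replacement lemma: any sup-irreducible component can be replaced by some `Mf j`. -/
lemma replace {r : ℕ} {L A a : M} (ha : SupIrreducible a) (hA : A < L) (h : a ⊔ A = L)
    (Mf : Fin r → M) (hM : Finset.univ.sup Mf = L) :
    ∃ j : Fin r, Mf j ⊔ A = L := by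
  have main : ∀ s : Finset (Fin r), s.sup Mf ⊔ A = L → ∃ j ∈ s, Mf j ⊔ A = L := by
    intro s
    induction s using Finset.induction with
    | empty =>
      intro hs
      simp only [Finset.sup_empty, bot_sup_eq] at hs
      exact absurd hs hA.ne
    | @insert j s hj ih =>
      intro hs
      rw [Finset.sup_insert] at hs
      have hsplit : (Mf j ⊔ A) ⊔ (s.sup Mf ⊔ A) = L := by
        rw [sup_sup_sup_comm, sup_idem] at *
        exact hs
      rcases irr_over ha hA h le_sup_right le_sup_right hsplit with hc | hc
      · exact ⟨j, Finset.mem_insert_self j s, hc⟩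
      · obtain ⟨j', hj', hj'2⟩ := ih hc
        exact ⟨j', Finset.mem_insert_of_mem hj', hj'2⟩
  obtain ⟨j, _, hj⟩ := main Finset.univ (by rw [hM, sup_eq_left.2 hA.le])
  exact ⟨j, hj⟩

lemma exchange {p r : ℕ} {L : M} (Lf : Fin p → M) (Mf : Fin r → M)
    (hLirr : ∀ i, SupIrreducible (Lf i))
    (hMsup : Finset.univ.sup Mf = L) :
    ∀ T : Finset (Fin p), ∀ J : Finset (Fin r),
      J.sup Mf ⊔ T.sup Lf = L → J.card + T.card ≤ p →
      ∃ J' : Finset (Fin r), J'.sup Mf = L ∧ J'.card ≤ p := by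
  intro T
  induction T using Finset.strongInduction with
  | _ T ih =>
    intro J hJT hcard
    rcases T.eq_empty_or_nonempty with rfl | ⟨i, hi⟩
    · refine ⟨J, ?_, by simpa using hcard⟩
      simpa using hJT
    · have hss : T.erase i ⊂ T := Finset.erase_ssubset hi
      have hcard' : (T.erase i).card = T.card - 1 := Finset.card_erase_of_mem hi
      have hTpos : 1 ≤ T.card := Finset.card_pos.2 ⟨i, hi⟩
      set A := J.sup Mf ⊔ (T.erase i).sup Lf with hAdef
      have hTs : Lf i ⊔ (T.erase i).sup Lf = T.sup Lf := by
        rw [← Finset.sup_insert, Finset.insert_erase hi]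
      have hAi : Lf i ⊔ A = L := by
        rw [hAdef, sup_comm (J.sup Mf), ← sup_assoc, hTs, sup_comm]
        exact hJT
      by_cases hAL : A = L
      · exact ih _ hss J (by rw [← hAdef]; exact hAL) (by omega)
      · have hAlt : A < L := lt_of_le_of_ne (hAi ▸ le_sup_right) hAL
        obtain ⟨j, hj⟩ := replace (hLirr i) hAlt hAi Mf hMsup
        refine ih _ hss (insert j J) ?_ ?_
        · rw [Finset.sup_insert, sup_assoc, ← hAdef]
          exact hj
        · have := Finset.card_insert_le j J
          omega

lemma count_le {p r : ℕ} {L : M} (Lf : Fin p → M) (Mf : Fin r → M)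
    (hLsup : Finset.univ.sup Lf = L)
    (hMsup : Finset.univ.sup Mf = L)
    (hLirr : ∀ i, SupIrreducible (Lf i))
    (hMnoncanc : ∀ j : Fin r, (Finset.univ.erase j).sup Mf < L) : r ≤ p := by
  obtain ⟨J', hJ'sup, hJ'card⟩ :=
    exchange Lf Mf hLirr hMsup Finset.univ ∅
      (by simpa using hLsup) (by simp)
  have hJ'univ : J' = Finset.univ := by
    rw [Finset.eq_univ_iff_forall]
    intro j
    by_contra hj
    have hsub : J' ⊆ Finset.univ.erase j :=
      fun x hx => Finset.mem_erase.2 ⟨fun h => hj (h ▸ hx), Finset.mem_univ x⟩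
    have : L ≤ (Finset.univ.erase j).sup Mf := hJ'sup ▸ Finset.sup_mono hsub
    exact (hMnoncanc j).not_ge this
  rw [hJ'univ] at hJ'card
  simpa using hJ'card

end Aux

/-- Kurosh–Ore theorem: in a modular lattice with ⊥, two irredundant
representations of `L` as finite joins of sup-irreducible elements have the
same number of components, and each component of the first representation can
be replaced by a suitable component of the second. -/
theorem kurosh_ore
    {M : Type*} [Lattice M] [IsModularLattice M] [OrderBot M]
    (L : M) (p r : ℕ)
    (Lf : Fin p → M) (Mf : Fin r → M)
    (hLsup : Finset.univ.sup Lf = L)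
    (hMsup : Finset.univ.sup Mf = L)
    (hLirr : ∀ i, SupIrreducible (Lf i))
    (hMirr : ∀ j, SupIrreducible (Mf j))
    (hLnoncanc : ∀ i : Fin p, (Finset.univ.erase i).sup Lf < L)
    (hMnoncanc : ∀ j : Fin r, (Finset.univ.erase j).sup Mf < L) :
    p = r ∧ ∀ i : Fin p, ∃ j : Fin r, Mf j ⊔ (Finset.univ.erase i).sup Lf = L := by
  constructor
  · exact le_antisymm (count_le Mf Lf hMsup hLsup hMirr hLnoncanc)
      (count_le Lf Mf hLsup hMsup hLirr hMnoncanc)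
  · intro i
    have hAi : Lf i ⊔ (Finset.univ.erase i).sup Lf = L := by
      rw [← Finset.sup_insert, Finset.insert_erase (Finset.mem_univ i)]
      exact hLsup
    exact replace (hLirr i) (hLnoncanc i) hAi Mf hMsup
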